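/- Runtime confounding counterexample structure: there exists a discrete probability space with random variables H₁, A₁, X₂, A₂, Y (all taking finitely many values) satisfying positivity of the propensities P(A₁ = a₁ | H₁) and P(A₂ = a₂ | H₁, A₁, X₂), such that E[ E[ Y | H₁, A₁ = a₁, X₂, A₂ = a₂ ] | H₁ = h₁, A₁ = a₁ ] ≠ E[ Y | H₁ = h₁, A₁ = a₁, A₂ = a₂ ] for some h₁ in the support of H₁. -/

import Mathlib

open MeasureTheory ProbabilityTheory

open scoped ENNReal

noncomputable def μ10 : Measure (Fin 10) := (10:ℝ≥0∞)⁻¹ • Measure.count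

lemma μ10_apply (p : Fin 10 → Prop) [DecidablePred p] :
    μ10 {ω | p ω} = (Finset.univ.filter p).card / 10 := by
  have : {ω | p ω} = ↑(Finset.univ.filter p) := by ext x; simp
  rw [μ10, Measure.smul_apply, this, Measure.count_apply_finset,
    ENNReal.div_eq_inv_mul]
  rfl

instance : IsProbabilityMeasure μ10 := by
  constructor
  have : (Set.univ : Set (Fin 10)) = {ω | True} := by simp
  rw [this, μ10_apply]
  simp
  norm_num [ENNReal.div_self]

lemma μ10_pos (s : Set (Fin 10)) (x : Fin 10) (hx : x ∈ s) : 0 < μ10 s := by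
  rw [pos_iff_ne_zero, μ10, Measure.smul_apply, smul_eq_mul]
  exact mul_ne_zero (by simp) (Measure.count_ne_zero ⟨x, hx⟩)

lemma cond10_pos (s t : Set (Fin 10)) (x : Fin 10) (hx : x ∈ s ∩ t) :
    0 < (μ10[|s]) t := by
  rw [cond_apply (show MeasurableSet s from trivial)]
  exact ENNReal.mul_pos (ENNReal.inv_ne_zero.mpr (measure_ne_top _ _))
    (μ10_pos _ x hx).ne'

lemma cond_integral (p : Fin 10 → Prop) [DecidablePred p] (f : Fin 10 → ℝ)
    (hne : μ10 {ω | p ω} ≠ 0) :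
    ∫ ω, f ω ∂(μ10[|{ω | p ω}]) =
      ((Finset.univ.filter p).card : ℝ)⁻¹ * ∑ x ∈ Finset.univ.filter p, f x := by
  have : IsProbabilityMeasure (μ10[|{ω | p ω}]) := cond_isProbabilityMeasure hne
  rw [integral_fintype (Integrable.of_finite)]; simp only [measureReal_def]
  have hcard : ((Finset.univ.filter p).card : ℝ≥0∞) ≠ 0 := by
    intro h
    apply hne
    rw [μ10_apply]
    simp only [h, ENNReal.zero_div]
  have key : ∀ x : Fin 10, (μ10[|{ω | p ω}]) {x} =
      if p x then ((Finset.univ.filter p).card : ℝ≥0∞)⁻¹ else 0 := by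
    intro x
    rw [cond_apply (show MeasurableSet {ω | p ω} from trivial)]
    by_cases hx : p x
    · have h1 : {ω | p ω} ∩ {x} = {ω | p ω ∧ ω = x} := by ext y; simp
      rw [h1, μ10_apply p, μ10_apply (fun ω => p ω ∧ ω = x)]
      have h2 : Finset.univ.filter (fun ω => p ω ∧ ω = x) = {x} := by
        ext y; simp; rintro rfl; exact hx
      rw [h2]
      simp only [Finset.card_singleton, Nat.cast_one, if_pos hx]
      rw [ENNReal.div_eq_inv_mul, ENNReal.div_eq_inv_mul, mul_one]
      rw [ENNReal.mul_inv (Or.inl (by simp)) (Or.inr hcard), inv_inv]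
      rw [mul_comm (10:ℝ≥0∞) _, mul_assoc, ENNReal.mul_inv_cancel (by norm_num) (by norm_num), mul_one]
    · have h1 : {ω | p ω} ∩ {x} = ∅ := by
        ext y; simp only [Set.mem_inter_iff, Set.mem_setOf_eq, Set.mem_singleton_iff,
          Set.mem_empty_iff_false, iff_false, not_and]
        rintro h rfl; exact hx h
      rw [h1, measure_empty, mul_zero, if_neg hx]
  simp only [key]
  have : ∀ x : Fin 10, (if p x then ((Finset.univ.filter p).card : ℝ≥0∞)⁻¹ else 0).toReal • f x
      = if p x then ((Finset.univ.filter p).card : ℝ)⁻¹ * f x else 0 := by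
    intro x
    by_cases hx : p x <;> simp [hx, ENNReal.toReal_inv]
  simp only [this]
  rw [Finset.mul_sum, Finset.sum_filter]

def Xf : Fin 10 → Bool := fun i => decide (i.val < 5)
def Af : Fin 10 → Bool := fun i => decide (i.val < 4 ∨ i.val = 5)
noncomputable def Yf : Fin 10 → ℝ := fun i => if i.val < 5 then 1 else 0

/-- Runtime confounding counterexample structure: there exists a finite
probability space with variables `H₁, A₁, X₂, A₂, Y` satisfying positivity of
both propensity scores such that the iterated G-computation formula
`E[ E[ Y | H₁, A₁ = a₁, X₂, A₂ = a₂ ] | H₁ = h₁, A₁ = a₁ ]` differs from the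
naive history-adjusted quantity `E[ Y | H₁ = h₁, A₁ = a₁, A₂ = a₂ ]`. -/
theorem runtime_confounding_counterexample :
    ∃ (Ω : Type) (_ : Fintype Ω) (_ : MeasurableSpace Ω) (μ : Measure Ω)
      (_ : IsProbabilityMeasure μ)
      (H₁ : Ω → Bool) (A₁ : Ω → Bool) (X₂ : Ω → Bool) (A₂ : Ω → Bool)
      (Y : Ω → ℝ) (a₁ a₂ : Bool) (h₁ : Bool),
      -- h₁ in the support and positivity of the first propensity:
      μ {ω | H₁ ω = h₁ ∧ A₁ ω = a₁} > 0 ∧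
      (∀ h : Bool, μ (H₁ ⁻¹' {h}) > 0 →
        (μ[|H₁ ⁻¹' {h}]) (A₁ ⁻¹' {a₁}) > 0) ∧
      -- positivity of the second propensity given (H₁, A₁, X₂):
      (∀ h a x : Bool, μ {ω | H₁ ω = h ∧ A₁ ω = a ∧ X₂ ω = x} > 0 →
        (μ[|{ω | H₁ ω = h ∧ A₁ ω = a ∧ X₂ ω = x}]) (A₂ ⁻¹' {a₂}) > 0) ∧
      -- iterated G-computation ≠ naive history adjustment:
      (∫ ω, (∫ ω', Y ω'
            ∂(μ[|{ω'' | H₁ ω'' = h₁ ∧ A₁ ω'' = a₁ ∧ X₂ ω'' = X₂ ω ∧ A₂ ω'' = a₂}]))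
          ∂(μ[|{ω | H₁ ω = h₁ ∧ A₁ ω = a₁}]))
        ≠ ∫ ω, Y ω ∂(μ[|{ω | H₁ ω = h₁ ∧ A₁ ω = a₁ ∧ A₂ ω = a₂}]) := by
  refine ⟨Fin 10, inferInstance, inferInstance, μ10, inferInstance,
    fun _ => true, fun _ => true, Xf, Af, Yf, true, true, true, ?_, ?_, ?_, ?_⟩
  · exact μ10_pos _ 0 (by constructor <;> rfl)
  · intro h hh
    exact cond10_pos _ _ 0 ⟨by
      rcases h with _|_
      · exfalso
        have : ((fun (_ : Fin 10) => true) ⁻¹' {false}) = (∅ : Set (Fin 10)) := by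
          ext y; simp
        rw [this, measure_empty] at hh
        exact lt_irrefl _ hh
      · rfl, rfl⟩
  · intro h a x hpos
    have hempty : ∀ (s : Set (Fin 10)), s = ∅ → ¬ (μ10 s > 0) := by
      rintro s rfl h; rw [measure_empty] at h; exact lt_irrefl _ h
    match h, a, x with
    | false, _, _ => exact absurd hpos (hempty _ (by ext y; simp))
    | true, false, _ => exact absurd hpos (hempty _ (by ext y; simp))
    | true, true, true => exact cond10_pos _ _ 0 ⟨⟨rfl, rfl, by decide⟩, show Af 0 = true by decide⟩
    | true, true, false => exact cond10_pos _ _ 5 ⟨⟨rfl, rfl, by decide⟩, show Af 5 = true by decide⟩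
  · -- the quantitative computation
    simp only [eq_self_iff_true, true_and]
    have hT : (∫ ω', Yf ω'
        ∂(μ10[|{ω'' | Xf ω'' = true ∧ Af ω'' = true}])) = 1 := by
      rw [cond_integral (fun ω'' : Fin 10 => Xf ω'' = true ∧ Af ω'' = true) Yf
        (μ10_pos {ω'' | Xf ω'' = true ∧ Af ω'' = true} 0 ⟨by decide, by decide⟩).ne']
      have h1 : (Finset.univ.filter
          (fun ω'' : Fin 10 => Xf ω'' = true ∧ Af ω'' = true)) = {0, 1, 2, 3} := by decide
      rw [h1]
      rw [Finset.sum_insert (by decide), Finset.sum_insert (by decide),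
        Finset.sum_insert (by decide), Finset.sum_singleton]
      norm_num [Yf, show ((3:Fin 10):ℕ) = 3 from rfl, show ((5:Fin 10):ℕ) = 5 from rfl,
        show (({0,1,2,3} : Finset (Fin 10)).card) = 4 by decide,
        show (({0,1,2,3,5} : Finset (Fin 10)).card) = 5 by decide]
    have hF : (∫ ω', Yf ω'
        ∂(μ10[|{ω'' | Xf ω'' = false ∧ Af ω'' = true}])) = 0 := by
      rw [cond_integral (fun ω'' : Fin 10 => Xf ω'' = false ∧ Af ω'' = true) Yf
        (μ10_pos {ω'' | Xf ω'' = false ∧ Af ω'' = true} 5 ⟨by decide, by decide⟩).ne']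
      have h1 : (Finset.univ.filter
          (fun ω'' : Fin 10 => Xf ω'' = false ∧ Af ω'' = true)) = {5} := by decide
      rw [h1, Finset.sum_singleton]
      norm_num [Yf, show ((3:Fin 10):ℕ) = 3 from rfl, show ((5:Fin 10):ℕ) = 5 from rfl,
        show (({0,1,2,3} : Finset (Fin 10)).card) = 4 by decide,
        show (({0,1,2,3,5} : Finset (Fin 10)).card) = 5 by decide]
    have hg : ∀ ω : Fin 10, (∫ ω', Yf ω'
        ∂(μ10[|{ω'' | Xf ω'' = Xf ω ∧ Af ω'' = true}]))
        = if Xf ω then (1:ℝ) else 0 := by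
      intro ω
      cases hx : Xf ω
      · rw [hF]; simp
      · rw [hT]; simp
    rw [cond_integral (fun _ : Fin 10 => True) _ (μ10_pos {_ω : Fin 10 | True} 0 trivial).ne']
    rw [cond_integral (fun ω : Fin 10 => Af ω = true) _
      (μ10_pos {ω : Fin 10 | Af ω = true} 0 (show Af 0 = true by decide)).ne']
    simp only [hg]
    have h2 : (Finset.univ.filter (fun _ : Fin 10 => True)) = Finset.univ :=
      Finset.filter_true _
    have h3 : (Finset.univ.filter
        (fun ω : Fin 10 => Af ω = true)) = {0,1,2,3,5} := by decide
    rw [h2, h3]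
    have h4 : ∑ x : Fin 10, (if Xf x = true then (1:ℝ) else 0) = 5 := by
      rw [Finset.sum_boole]
      have : (Finset.univ.filter (fun x : Fin 10 => Xf x = true)).card = 5 := by decide
      rw [this]; norm_num
    rw [h4]
    rw [Finset.sum_insert (by decide), Finset.sum_insert (by decide),
      Finset.sum_insert (by decide), Finset.sum_insert (by decide), Finset.sum_singleton]
    norm_num [Yf, show ((3:Fin 10):ℕ) = 3 from rfl, show ((5:Fin 10):ℕ) = 5 from rfl,
        show (({0,1,2,3} : Finset (Fin 10)).card) = 4 by decide,
        show (({0,1,2,3,5} : Finset (Fin 10)).card) = 5 by decide]
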